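/- Let G be a König–Egerváry graph. If G has a Sachs subgraph (i.e., a spanning subgraph each of whose connected components is a single edge or a cycle), then G has a perfect matching. -/

import Mathlib

/-! ## Basic matching terminology -/

/-- `M` is a matching of the simple graph `G`: a set of edges of `G` that are pairwise
non-adjacent, i.e. no two distinct edges of `M` share a vertex. -/
def IsMatching {V : Type} (G : SimpleGraph V) (M : Finset (Sym2 V)) : Prop :=
  (∀ e ∈ M, e ∈ G.edgeSet) ∧
  ∀ e ∈ M, ∀ f ∈ M, e ≠ f → ∀ v : V, ¬(v ∈ e ∧ v ∈ f)

/-- A vertex `v` is saturated by the edge set `M` if it is an endpoint of some edge of `M`. -/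
def Saturates {V : Type} (M : Finset (Sym2 V)) (v : V) : Prop := ∃ e ∈ M, v ∈ e

/-- `M` is a perfect matching of `G`: a matching saturating every vertex of `G`. -/
def IsPerfectMatching {V : Type} (G : SimpleGraph V) (M : Finset (Sym2 V)) : Prop :=
  IsMatching G M ∧ ∀ v : V, Saturates M v

/-- The matching number `μ(G)`: the maximum cardinality of a matching of `G`. -/
noncomputable def matchNum {V : Type} (G : SimpleGraph V) : ℕ :=
  sSup {n | ∃ M : Finset (Sym2 V), IsMatching G M ∧ M.card = n}

/-- The independence number `α(G)`: the maximum cardinality of a set of pairwise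
non-adjacent vertices. -/
noncomputable def indepNum {V : Type} (G : SimpleGraph V) : ℕ :=
  sSup {n | ∃ S : Finset V, (∀ u ∈ S, ∀ v ∈ S, ¬ G.Adj u v) ∧ S.card = n}

/-- `G` is a König–Egerváry graph if `α(G) + μ(G) = |V(G)|`. -/
def IsKonigEgervary {V : Type} [Fintype V] (G : SimpleGraph V) : Prop :=
  indepNum G + matchNum G = Fintype.card V

/-! ## Degrees and graphs whose components are single edges or cycles -/

/-- The degree of `v` in `H`, as the cardinality of its neighbour set. -/
noncomputable def ndeg {V : Type} (H : SimpleGraph V) (v : V) : ℕ := (H.neighborSet v).ncard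

/-- Every connected component of (the finite simple graph) `H` is a single edge (a copy of
`K₂`) or a cycle: every vertex has degree `1` or `2`, and the degree is constant on each
connected component (a finite connected `1`-regular graph is `K₂`, and a finite connected
`2`-regular graph is a cycle). -/
def ComponentsAreEdgesOrCycles {V : Type} (H : SimpleGraph V) : Prop :=
  (∀ v : V, ndeg H v = 1 ∨ ndeg H v = 2) ∧
  ∀ ⦃u v : V⦄, H.Adj u v → ndeg H u = ndeg H v

/-- `H` is a Sachs subgraph of `G`: a spanning subgraph each of whose connected components
is a single edge or a cycle. -/
def IsSachsSubgraph {V : Type} (G H : SimpleGraph V) : Prop :=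
  H ≤ G ∧ ComponentsAreEdgesOrCycles H

/-- `H` has a connected component which is an odd cycle: a component all of whose vertices
have degree `2` (hence a cycle) with an odd number of vertices. -/
def HasOddCycleComponent {V : Type} (H : SimpleGraph V) : Prop :=
  ∃ c : H.ConnectedComponent, (∀ v ∈ c.supp, ndeg H v = 2) ∧ Odd c.supp.ncard

/-- Degree of a vertex in a subgraph. -/
noncomputable def subNdeg {V : Type} {G : SimpleGraph V} (H : G.Subgraph) (v : V) : ℕ :=
  (H.neighborSet v).ncard

/-- Every connected component of the subgraph `H` of `G` is a single edge or a cycle. -/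
def SubComponentsAreEdgesOrCycles {V : Type} {G : SimpleGraph V} (H : G.Subgraph) : Prop :=
  (∀ v ∈ H.verts, subNdeg H v = 1 ∨ subNdeg H v = 2) ∧
  ∀ ⦃u v : V⦄, H.Adj u v → subNdeg H u = subNdeg H v

/-- The subgraph `H` of `G` has a connected component which is an odd cycle. -/
def SubHasOddCycleComponent {V : Type} {G : SimpleGraph V} (H : G.Subgraph) : Prop :=
  ∃ c : H.coe.ConnectedComponent,
    (∀ v ∈ c.supp, subNdeg H ↑v = 2) ∧ Odd c.supp.ncard

/-- `prk G`: the maximum order of a subgraph of `G` each of whose connected components is a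
single edge or a cycle (`0` for an edgeless graph). -/
noncomputable def prk {V : Type} (G : SimpleGraph V) : ℕ :=
  sSup {n | ∃ H : G.Subgraph, SubComponentsAreEdgesOrCycles H ∧ H.verts.ncard = n}

/-- `X` is a vertex cover of `H`: every edge of `H` has an endpoint in `X`. -/
def IsVertexCover {V : Type} (H : SimpleGraph V) (X : Set V) : Prop :=
  ∀ ⦃u v : V⦄, H.Adj u v → u ∈ X ∨ v ∈ X

/-! ## Symmetric differences of matchings -/

/-- The graph on `V` whose edges are the symmetric difference `M₁ △ M₂`. -/
def symmDiffGraph {V : Type} [DecidableEq V] (M₁ M₂ : Finset (Sym2 V)) : SimpleGraph V :=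
  SimpleGraph.fromEdgeSet ↑(symmDiff M₁ M₂)

/-- On the vertex set `S`, consecutive edges of `H` alternate between `M₁` and `M₂`. -/
def AltOn {V : Type} (H : SimpleGraph V) (M₁ M₂ : Finset (Sym2 V)) (S : Set V) : Prop :=
  ∀ ⦃u v w : V⦄, v ∈ S → H.Adj u v → H.Adj v w → u ≠ w →
    (s(u, v) ∈ M₁ ∧ s(v, w) ∈ M₂) ∨ (s(u, v) ∈ M₂ ∧ s(v, w) ∈ M₁)

/-! ## Perfect flowers -/

/-- `(C, P)` is an `M`-perfect flower: `C` is an odd cycle of length `2k+1` containing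
exactly `k` edges of `M`, and `P` is a nontrivial `M`-alternating path whose first and last
edges belong to `M`, such that `V(C) ∩ V(P)` consists exactly of the common endpoint `a`. -/
structure IsPerfectFlower {V : Type} [DecidableEq V] (G : SimpleGraph V)
    (M : Finset (Sym2 V)) {a b : V} (C : G.Walk a a) (P : G.Walk a b) : Prop where
  cycle : C.IsCycle
  odd : Odd C.length
  blossom : C.edges.countP (fun e => e ∈ M) = C.length / 2
  path : P.IsPath
  nontrivial : 0 < P.length
  alternating : List.Chain' (fun e f => e ∈ M ↔ f ∉ M) P.edges
  firstEdge : ∀ e ∈ P.edges.head?, e ∈ M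
  lastEdge : ∀ e ∈ P.edges.getLast?, e ∈ M
  meet : ∀ v : V, (v ∈ C.support ∧ v ∈ P.support) ↔ v = a

/-- The perfect-flower part `PF(G)`: vertices belonging to some `M`-perfect flower, for some
maximum matching `M` of `G`. -/
def PF {V : Type} [DecidableEq V] (G : SimpleGraph V) : Set V :=
  {x | ∃ M : Finset (Sym2 V), IsMatching G M ∧ M.card = matchNum G ∧
    ∃ (a b : V) (C : G.Walk a a) (P : G.Walk a b),
      IsPerfectFlower G M C P ∧ (x ∈ C.support ∨ x ∈ P.support)}

/-- The perfect-flower-free part `PFF(G) = V(G) \ PF(G)`. -/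
def PFF {V : Type} [DecidableEq V] (G : SimpleGraph V) : Set V := (PF G)ᶜ

/-! ## Determinant and permanent of a graph -/

/-- The determinant of the adjacency matrix of `G` over `ℤ`. -/
noncomputable def detG {V : Type} [Fintype V] [DecidableEq V] (G : SimpleGraph V) : ℤ :=
  letI := Classical.decRel G.Adj
  (SimpleGraph.adjMatrix ℤ G).det

/-- The permanent of the adjacency matrix of `G` over `ℤ`. -/
noncomputable def permG {V : Type} [Fintype V] [DecidableEq V] (G : SimpleGraph V) : ℤ :=
  letI := Classical.decRel G.Adj
  (SimpleGraph.adjMatrix ℤ G).permanent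

/-- `det(G[X])`, the determinant of the adjacency matrix of the induced subgraph `G[X]`
(equal to `1` when `X = ∅`, the determinant of the empty matrix). -/
noncomputable def detInd {V : Type} [Fintype V] [DecidableEq V]
    (G : SimpleGraph V) (X : Set V) : ℤ :=
  letI : Fintype ↥X := X.toFinite.fintype
  detG (G.induce X)

/-- `perm(G[X])`, the permanent of the adjacency matrix of the induced subgraph `G[X]`
(equal to `1` when `X = ∅`). -/
noncomputable def permInd {V : Type} [Fintype V] [DecidableEq V]
    (G : SimpleGraph V) (X : Set V) : ℤ :=
  letI : Fintype ↥X := X.toFinite.fintype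
  permG (G.induce X)

/-! ## Auxiliary constructions -/

/-- The subgraph of `G` spanned by the edges of a matching `M`: its vertices are the
endpoints of edges of `M` and its edges are exactly the edges of `M`. -/
def matchingSubgraph {V : Type} (G : SimpleGraph V) (M : Finset (Sym2 V))
    (hM : ∀ e ∈ M, e ∈ G.edgeSet) : G.Subgraph where
  verts := {v | ∃ e ∈ M, v ∈ e}
  Adj u v := s(u, v) ∈ M
  adj_sub h := G.mem_edgeSet.mp (hM _ h)
  edge_vert h := ⟨_, h, Sym2.mem_mk_left _ _⟩
  symm := ⟨fun u v (h : s(u, v) ∈ M) => by show s(v, u) ∈ M; rwa [Sym2.eq_swap]⟩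

/-- The restriction of an edge set `M` to the edges with both endpoints in `X`. -/
noncomputable def restrictEdges {V : Type} (M : Finset (Sym2 V)) (X : Set V) :
    Finset (Sym2 V) :=
  letI := Classical.decPred fun e : Sym2 V => ∀ v ∈ e, v ∈ X
  M.filter fun e => ∀ v ∈ e, v ∈ X

/-- `M` is a perfect matching of the induced subgraph `G[X]`: a matching of `G` whose edges
have both endpoints in `X`, saturating every vertex of `X`. -/
def IsPerfectMatchingOn {V : Type} (G : SimpleGraph V) (X : Set V)
    (M : Finset (Sym2 V)) : Prop :=
  (∀ e ∈ M, e ∈ G.edgeSet ∧ ∀ v ∈ e, v ∈ X) ∧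
  (∀ e ∈ M, ∀ f ∈ M, e ≠ f → ∀ v : V, ¬(v ∈ e ∧ v ∈ f)) ∧
  ∀ v ∈ X, ∃ e ∈ M, v ∈ e

/-- A König–Egerváry graph with a Sachs subgraph has a perfect matching. -/
theorem stmt6 {V : Type} [Fintype V] (G : SimpleGraph V) (hG : IsKonigEgervary G)
    (hex : ∃ H : SimpleGraph V, IsSachsSubgraph G H) :
    ∃ M : Finset (Sym2 V), IsPerfectMatching G M := by
  classical
  obtain ⟨H, hHG, hdeg12, hconst⟩ := hex
  set n := Fintype.card V with hn
  -- degrees via finsets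
  have hndeg : ∀ v : V, ndeg H v = (H.neighborFinset v).card := by
    intro v
    rw [ndeg, ← Set.ncard_coe_finset]; congr 1; ext w; simp
  set d : V → ℕ := fun v => (H.neighborFinset v).card with hd
  have hd12 : ∀ v : V, d v = 1 ∨ d v = 2 := by
    intro v; have := hdeg12 v; rwa [hndeg] at this
  have hdc : ∀ ⦃u v : V⦄, H.Adj u v → d u = d v := by
    intro u v huv
    have := hconst huv; rwa [hndeg, hndeg] at this
  -- a maximum independent set
  have hSmem : indepNum G ∈
      {k | ∃ S : Finset V, (∀ u ∈ S, ∀ v ∈ S, ¬ G.Adj u v) ∧ S.card = k} := by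
    apply Nat.sSup_mem
    · exact ⟨0, ∅, by simp, rfl⟩
    · refine ⟨Fintype.card V, fun k hk => ?_⟩
      obtain ⟨S, _, rfl⟩ := hk; exact S.card_le_univ
  obtain ⟨S, hSind, hScard⟩ := hSmem
  -- a maximum matching
  have hMmem : matchNum G ∈
      {k | ∃ M : Finset (Sym2 V), IsMatching G M ∧ M.card = k} := by
    apply Nat.sSup_mem
    · exact ⟨0, ∅, ⟨by simp, by simp⟩, rfl⟩
    · refine ⟨Fintype.card (Sym2 V), fun k hk => ?_⟩
      obtain ⟨M, _, rfl⟩ := hk; exact M.card_le_univ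
  obtain ⟨M₀, hM₀, hM₀card⟩ := hMmem
  -- any matching has at most n/2 edges
  have h2M : 2 * M₀.card ≤ n := by
    have hcard : ∀ e ∈ M₀, (Finset.univ.filter (fun v => v ∈ e)).card = 2 := by
      intro e he
      induction e with
      | h a b =>
        have hadj : G.Adj a b := G.mem_edgeSet.mp (hM₀.1 _ he)
        have hab : a ≠ b := G.ne_of_adj hadj
        have : (Finset.univ.filter (fun v => v ∈ s(a, b))) = {a, b} := by
          ext v; simp [Sym2.mem_iff]
        rw [this, Finset.card_insert_of_notMem (by simpa using hab), Finset.card_singleton]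
    have hdisj : ∀ e ∈ M₀, ∀ f ∈ M₀, e ≠ f →
        Disjoint (Finset.univ.filter (fun v => v ∈ e)) (Finset.univ.filter (fun v => v ∈ f)) := by
      intro e he f hf hef
      rw [Finset.disjoint_left]
      intro v hve hvf
      rw [Finset.mem_filter] at hve hvf
      exact hM₀.2 e he f hf hef v ⟨hve.2, hvf.2⟩
    have := Finset.card_biUnion hdisj
    have hle : (M₀.biUnion (fun e => Finset.univ.filter (fun v => v ∈ e))).card ≤ n := by
      rw [hn]; exact Finset.card_le_univ _
    rw [this, Finset.sum_congr rfl hcard, Finset.sum_const, smul_eq_mul] at hle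
    omega
  -- 2|S| ≥ n
  have h2S : n ≤ 2 * S.card := by
    have := hG
    rw [IsKonigEgervary, ← hScard, ← hM₀card] at this
    omega
  -- Hall condition for S → neighbors in H
  set t : ↥S → Finset V := fun a => H.neighborFinset a.val with ht
  have hall : ∀ A : Finset ↥S, A.card ≤ (A.biUnion t).card := by
    intro A
    set N := A.biUnion t with hN
    have hNmem : ∀ w : V, w ∈ N ↔ ∃ a ∈ A, H.Adj a.val w := by
      intro w; simp [hN, ht, SimpleGraph.mem_neighborFinset]
    -- split by degree
    have hsplitA : A.card =
        (A.filter fun a => d a.val = 1).card + (A.filter fun a => d a.val = 2).card := by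
      rw [← Finset.card_filter_add_card_filter_not (p := fun a => d a.val = 1)]
      have : (A.filter fun a => ¬ d a.val = 1) = (A.filter fun a => d a.val = 2) := by
        apply Finset.filter_congr
        intro a _
        rcases hd12 a.val with h | h <;> simp [h]
      rw [this]
    have hsplitN : N.card =
        (N.filter fun w => d w = 1).card + (N.filter fun w => d w = 2).card := by
      rw [← Finset.card_filter_add_card_filter_not (p := fun w => d w = 1)]
      have : (N.filter fun w => ¬ d w = 1) = (N.filter fun w => d w = 2) := by
        apply Finset.filter_congr
        intro w _
        rcases hd12 w with h | h <;> simp [h]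
      rw [this]
    -- choice of a neighbor
    set g : ↥S → V := fun a =>
      if h : (H.neighborFinset a.val).Nonempty then h.choose else a.val with hg
    have hgadj : ∀ a : ↥S, H.Adj a.val (g a) := by
      intro a
      have hne : (H.neighborFinset a.val).Nonempty := by
        rw [← Finset.card_pos]
        have h := hd12 a.val
        simp only [hd] at h
        omega
      rw [hg]; simp only [dif_pos hne]
      exact (SimpleGraph.mem_neighborFinset _ _ _).mp hne.choose_spec
    have claim1 : (A.filter fun a => d a.val = 1).card ≤ (N.filter fun w => d w = 1).card := by
      apply Finset.card_le_card_of_injOn g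
      · intro a ha
        rw [Finset.mem_coe, Finset.mem_filter] at ha
        refine Finset.mem_filter.mpr ⟨(hNmem _).mpr ⟨a, ha.1, hgadj a⟩, ?_⟩
        rw [← hdc (hgadj a)]; exact ha.2
      · intro a ha b hb hab
        simp only [Finset.coe_filter, Set.mem_setOf_eq] at ha hb
        have hwa : a.val ∈ H.neighborFinset (g a) :=
          (SimpleGraph.mem_neighborFinset _ _ _).mpr (hgadj a).symm
        have hwb : b.val ∈ H.neighborFinset (g a) := by
          rw [hab]; exact (SimpleGraph.mem_neighborFinset _ _ _).mpr (hgadj b).symm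
        have hdg : d (g a) = 1 := by rw [← hdc (hgadj a)]; exact ha.2
        obtain ⟨c, hc⟩ := Finset.card_eq_one.mp hdg
        rw [hc, Finset.mem_singleton] at hwa hwb
        exact Subtype.ext (hwa.trans hwb.symm)
    have claim2 : (A.filter fun a => d a.val = 2).card ≤ (N.filter fun w => d w = 2).card := by
      have hm : ∀ a ∈ A.filter (fun a => d a.val = 2),
          2 ≤ ((N.filter fun w => d w = 2).bipartiteAbove
            (fun (a : ↥S) (w : V) => H.Adj a.val w) a).card := by
        intro a ha
        rw [Finset.mem_filter] at ha
        have hsub : H.neighborFinset a.val ⊆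
            (N.filter fun w => d w = 2).bipartiteAbove (fun (a : ↥S) (w : V) => H.Adj a.val w) a := by
          intro w hw
          have hadj : H.Adj a.val w := (SimpleGraph.mem_neighborFinset _ _ _).mp hw
          rw [Finset.bipartiteAbove, Finset.mem_filter, Finset.mem_filter]
          exact ⟨⟨(hNmem _).mpr ⟨a, ha.1, hadj⟩, by rw [← hdc hadj]; exact ha.2⟩, hadj⟩
        calc 2 = d a.val := ha.2.symm
          _ ≤ _ := Finset.card_le_card hsub
      have hn' : ∀ w ∈ N.filter (fun w => d w = 2),
          ((A.filter fun a => d a.val = 2).bipartiteBelow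
            (fun (a : ↥S) (w : V) => H.Adj a.val w) w).card ≤ 2 := by
        intro w hw
        rw [Finset.mem_filter] at hw
        have hle : ((A.filter fun a => d a.val = 2).bipartiteBelow
            (fun (a : ↥S) (w : V) => H.Adj a.val w) w).card ≤ (H.neighborFinset w).card := by
          apply Finset.card_le_card_of_injOn (fun a => a.val)
          · intro a ha
            rw [Finset.mem_coe, Finset.bipartiteBelow, Finset.mem_filter] at ha
            exact (SimpleGraph.mem_neighborFinset _ _ _).mpr ha.2.symm
          · intro a _ b _ hab; exact Subtype.ext hab
        calc _ ≤ (H.neighborFinset w).card := hle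
          _ = 2 := hw.2
      have hdouble := Finset.card_mul_le_card_mul _ hm hn'
      omega
    omega
  obtain ⟨f, hfinj, hfmem⟩ := (Finset.all_card_le_biUnion_card_iff_exists_injective t).mp hall
  have hfadjH : ∀ a : ↥S, H.Adj a.val (f a) := by
    intro a
    exact (SimpleGraph.mem_neighborFinset _ _ _).mp (hfmem a)
  have hfadjG : ∀ a : ↥S, G.Adj a.val (f a) := fun a => hHG (hfadjH a)
  have hfS : ∀ a : ↥S, f a ∉ S := fun a ha => hSind a.val a.2 (f a) ha (hfadjG a)
  -- f is a bijection from S onto Sᶜ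
  have himg : Finset.univ.image f ⊆ Sᶜ := by
    intro v hv
    obtain ⟨a, _, rfl⟩ := Finset.mem_image.mp hv
    exact Finset.mem_compl.mpr (hfS a)
  have hcardimg : (Finset.univ.image f).card = S.card := by
    rw [Finset.card_image_of_injective _ hfinj, Finset.card_univ, Fintype.card_coe]
  have himg_eq : Finset.univ.image f = Sᶜ := by
    apply Finset.eq_of_subset_of_card_le himg
    rw [hcardimg, Finset.card_compl]
    omega
  -- the perfect matching
  refine ⟨Finset.image (fun a : ↥S => s(a.val, f a)) Finset.univ, ⟨?_, ?_⟩, ?_⟩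
  · intro e he
    obtain ⟨a, _, rfl⟩ := Finset.mem_image.mp he
    exact G.mem_edgeSet.mpr (hfadjG a)
  · intro e he e' he' hne v hv
    obtain ⟨a, _, rfl⟩ := Finset.mem_image.mp he
    obtain ⟨b, _, rfl⟩ := Finset.mem_image.mp he'
    obtain ⟨hva, hvb⟩ := hv
    rw [Sym2.mem_iff] at hva hvb
    rcases hva with rfl | rfl <;> rcases hvb with h | h
    · exact hne (by rw [Subtype.ext h])
    · exact hfS b (h ▸ a.2)
    · exact hfS a (h.symm ▸ b.2)
    · exact hne (by rw [hfinj h])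
  · intro v
    by_cases hv : v ∈ S
    · exact ⟨s(v, f ⟨v, hv⟩), Finset.mem_image.mpr ⟨⟨v, hv⟩, Finset.mem_univ _, rfl⟩,
        Sym2.mem_mk_left _ _⟩
    · have : v ∈ Finset.univ.image f := by rw [himg_eq]; exact Finset.mem_compl.mpr hv
      obtain ⟨a, _, rfl⟩ := Finset.mem_image.mp this
      exact ⟨s(a.val, f a), Finset.mem_image.mpr ⟨a, Finset.mem_univ _, rfl⟩,
        Sym2.mem_mk_right _ _⟩
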